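/- Let T be a finite abelian group, K a field of characteristic zero, and S ⊆ T with 2^{2k-1}·|T \ S| < |T|. Suppose f : S → K satisfies f(s) = c₁θ₁(s)+⋯+c_mθ_m(s) on S with m ≤ k, the θᵢ distinct characters of T and cᵢ ≠ 0. Then f is constant on S if and only if m ≤ 1 and θ₁ is the trivial character (the case m = 0 meaning f = 0). -/

import Mathlib

open Finset

lemma aux_char_indep {T K : Type*} [CommGroup T] [Fintype T] [DecidableEq T] [Field K] :
    ∀ (n : ℕ) (D : Finset (T →* Kˣ)) (c : (T →* Kˣ) → K) (A : Finset T),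
    D.card ≤ n + 1 →
    2 ^ n * (Aᶜ).card < Fintype.card T →
    (∀ s ∈ A, ∑ χ ∈ D, c χ * ((χ s : Kˣ) : K) = 0) →
    ∀ χ ∈ D, c χ = 0 := by
  intro n
  classical
  induction n with
  | zero =>
    intro D c A hcard hbound hvan χ hχ
    have hA : A.Nonempty := by
      by_contra h
      rw [Finset.not_nonempty_iff_eq_empty] at h
      subst h
      simp [Finset.card_compl] at hbound
    obtain ⟨s, hs⟩ := hA
    have hD : D = {χ} := by
      apply Finset.eq_singleton_iff_unique_mem.mpr
      refine ⟨hχ, fun y hy => ?_⟩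
      by_contra hne
      have : 2 ≤ D.card := Finset.one_lt_card.mpr ⟨y, hy, χ, hχ, hne⟩
      omega
    have := hvan s hs
    rw [hD, Finset.sum_singleton] at this
    have hne : ((χ s : Kˣ) : K) ≠ 0 := Units.ne_zero _
    exact (mul_eq_zero.mp this).resolve_right hne
  | succ n ih =>
    intro D c A hcard hbound hvan j hj
    by_cases hle : D.card ≤ n + 1
    · refine ih D c A hle ?_ hvan j hj
      calc 2 ^ n * (Aᶜ).card ≤ 2 ^ (n+1) * (Aᶜ).card := by
            gcongr <;> simp [Nat.pow_le_pow_right]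
        _ < Fintype.card T := hbound
    · -- D.card = n + 2 ≥ 2, pick l ≠ j
      have h2 : 2 ≤ D.card := by omega
      obtain ⟨l, hl, hlj⟩ : ∃ l ∈ D, l ≠ j := by
        obtain ⟨x, hx, y, hy, hxy⟩ := Finset.one_lt_card.mp h2
        by_cases h : x = j
        · exact ⟨y, hy, by rintro rfl; exact hxy h⟩
        · exact ⟨x, hx, h⟩
      -- pick t with l t ≠ j t
      obtain ⟨t, ht⟩ : ∃ t, l t ≠ j t := by
        by_contra h
        push_neg at h
        exact hlj (MonoidHom.ext h)
      -- A' = {s ∈ A | s * t ∈ A}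
      set A' : Finset T := A ∩ (Finset.univ.filter (fun s => s * t ∈ A)) with hA'
      have hA'c : (A'ᶜ).card ≤ 2 * (Aᶜ).card := by
        have h1 : A'ᶜ = Aᶜ ∪ (Finset.univ.filter (fun s => s * t ∈ A))ᶜ := by
          rw [hA', Finset.compl_inter]
        have h2' : ((Finset.univ.filter (fun s => s * t ∈ A))ᶜ).card ≤ (Aᶜ).card := by
          apply Finset.card_le_card_of_injOn (fun s => s * t)
          · intro s hs
            simp only [Finset.mem_compl, Finset.mem_filter, Finset.mem_univ, true_and] at hs ⊢
            simpa using hs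
          · intro a _ b _ hab
            exact mul_right_cancel hab
        calc (A'ᶜ).card ≤ (Aᶜ).card + ((Finset.univ.filter (fun s => s * t ∈ A))ᶜ).card := by
              rw [h1]; exact Finset.card_union_le _ _
          _ ≤ 2 * (Aᶜ).card := by omega
      -- new relation on D.erase l
      have hvan' : ∀ s ∈ A', ∑ χ ∈ D.erase l,
          (c χ * (((χ t : Kˣ) : K) - ((l t : Kˣ) : K))) * ((χ s : Kˣ) : K) = 0 := by
        intro s hs
        rw [hA'] at hs
        simp only [Finset.mem_inter, Finset.mem_filter, Finset.mem_univ, true_and] at hs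
        have e1 := hvan (s * t) hs.2
        have e2 := hvan s hs.1
        have e1' : ∑ χ ∈ D, c χ * (((χ t : Kˣ) : K) * ((χ s : Kˣ) : K)) = 0 := by
          rw [← e1]
          apply Finset.sum_congr rfl
          intro χ _
          rw [map_mul]
          push_cast
          ring
        have key : ∑ χ ∈ D, (c χ * (((χ t : Kˣ) : K) - ((l t : Kˣ) : K))) * ((χ s : Kˣ) : K) = 0 := by
          have : ∑ χ ∈ D, (c χ * (((χ t : Kˣ) : K) - ((l t : Kˣ) : K))) * ((χ s : Kˣ) : K)
              = (∑ χ ∈ D, c χ * (((χ t : Kˣ) : K) * ((χ s : Kˣ) : K)))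
                - ((l t : Kˣ) : K) * ∑ χ ∈ D, c χ * ((χ s : Kˣ) : K) := by
            rw [Finset.mul_sum, ← Finset.sum_sub_distrib]
            apply Finset.sum_congr rfl
            intro χ _
            ring
          rw [this, e1', e2, mul_zero, sub_zero]
        rw [← key]
        rw [← Finset.add_sum_erase _ _ hl]
        simp
      have hjl : j ∈ D.erase l := Finset.mem_erase.mpr ⟨fun h => hlj h.symm, hj⟩
      have hcard' : (D.erase l).card ≤ n + 1 := by
        rw [Finset.card_erase_of_mem hl]; omega
      have hbound' : 2 ^ n * (A'ᶜ).card < Fintype.card T := by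
        calc 2 ^ n * (A'ᶜ).card ≤ 2 ^ n * (2 * (Aᶜ).card) := by gcongr
          _ = 2 ^ (n+1) * (Aᶜ).card := by ring
          _ < Fintype.card T := hbound
      have := ih (D.erase l) (fun χ => c χ * (((χ t : Kˣ) : K) - ((l t : Kˣ) : K))) A'
        hcard' hbound' hvan' j hjl
      have hne : ((j t : Kˣ) : K) - ((l t : Kˣ) : K) ≠ 0 := by
        intro h
        apply ht
        apply Units.ext
        have := sub_eq_zero.mp h
        exact this.symm
      exact (mul_eq_zero.mp this).resolve_right hne

/-- With `2^(2k-1) * |T \ S| < |T|`, a function given on `S` by a linear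
combination of `m ≤ k` distinct characters with nonzero coefficients is
constant on `S` iff `m ≤ 1` and every character appearing is trivial. -/
theorem constant_on_subset_iff_trivial_character
    {T K : Type*} [CommGroup T] [Fintype T] [DecidableEq T]
    [Field K] [CharZero K]
    (k : ℕ) (S : Finset T)
    (hS : 2 ^ (2 * k - 1) * (Sᶜ).card < Fintype.card T)
    (f : T → K)
    (m : ℕ) (hm : m ≤ k)
    (θ : Fin m → (T →* Kˣ)) (hθ : Function.Injective θ)
    (c : Fin m → K) (hc : ∀ i, c i ≠ 0)
    (hf : ∀ s ∈ S, f s = ∑ i, c i * ((θ i s : Kˣ) : K)) :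
    (∃ a : K, ∀ s ∈ S, f s = a) ↔ (m ≤ 1 ∧ ∀ i, θ i = 1) := by
  classical
  constructor
  · rintro ⟨a, ha⟩
    set D : Finset (T →* Kˣ) := (Finset.univ.image θ) ∪ {1} with hD
    set g : (T →* Kˣ) → K :=
      fun χ => (∑ i ∈ Finset.univ.filter (fun i => θ i = χ), c i)
        - (if χ = 1 then a else 0) with hg
    have hg1 : ∀ i, (∑ j ∈ Finset.univ.filter (fun j => θ j = θ i), c j) = c i := by
      intro i
      have : Finset.univ.filter (fun j => θ j = θ i) = {i} := by
        ext j; simp [hθ.eq_iff]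
      rw [this, Finset.sum_singleton]
    have hvanD : ∀ s ∈ S, ∑ χ ∈ D, g χ * ((χ s : Kˣ) : K) = 0 := by
      intro s hs
      have hsplit : ∑ χ ∈ D, g χ * ((χ s : Kˣ) : K)
          = (∑ χ ∈ D, (∑ i ∈ Finset.univ.filter (fun i => θ i = χ), c i) * ((χ s : Kˣ) : K))
            - ∑ χ ∈ D, (if χ = 1 then a else 0) * ((χ s : Kˣ) : K) := by
        rw [← Finset.sum_sub_distrib]
        apply Finset.sum_congr rfl
        intro χ _
        rw [hg]
        ring
      have hfirst : (∑ χ ∈ D, (∑ i ∈ Finset.univ.filter (fun i => θ i = χ), c i) * ((χ s : Kˣ) : K)) = f s := by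
        rw [hD]
        rw [← Finset.sum_subset (Finset.subset_union_left (s₂ := ({1} : Finset (T →* Kˣ))))]
        · rw [Finset.sum_image (fun i _ j _ h => hθ h)]
          rw [hf s hs]
          apply Finset.sum_congr rfl
          intro i _
          rw [hg1]
        · intro χ _ hχ
          have : Finset.univ.filter (fun i => θ i = χ) = ∅ := by
            ext i
            simp only [Finset.mem_filter, Finset.mem_univ, true_and, Finset.notMem_empty,
              iff_false]
            intro h
            exact hχ (Finset.mem_image.mpr ⟨i, Finset.mem_univ i, h⟩)
          rw [this]
          simp
      have hsecond : ∑ χ ∈ D, (if χ = 1 then a else 0) * ((χ s : Kˣ) : K) = a := by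
        rw [Finset.sum_eq_single_of_mem (1 : T →* Kˣ)
          (Finset.mem_union_right _ (Finset.mem_singleton_self 1))]
        · simp
        · intro χ _ hne
          simp [hne]
      rw [hsplit, hfirst, hsecond, ha s hs, sub_self]
    have hzero : ∀ χ ∈ D, g χ = 0 := by
      apply aux_char_indep m D g S
      · have : (Finset.univ.image θ).card ≤ m := by
          calc (Finset.univ.image θ).card ≤ (Finset.univ : Finset (Fin m)).card :=
            Finset.card_image_le
          _ = m := by simp
        calc D.card ≤ (Finset.univ.image θ).card + ({1} : Finset (T →* Kˣ)).card :=
            Finset.card_union_le _ _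
          _ ≤ m + 1 := by
            have h1 : ({1} : Finset (T →* Kˣ)).card = 1 := Finset.card_singleton _
            omega
      · calc 2 ^ m * (Sᶜ).card ≤ 2 ^ (2 * k - 1) * (Sᶜ).card :=
            Nat.mul_le_mul_right _ (Nat.pow_le_pow_right (by norm_num) (by omega))
          _ < Fintype.card T := hS
      · exact hvanD
    have hθ1 : ∀ i, θ i = 1 := by
      intro i
      by_contra hne
      have hmem : θ i ∈ D := Finset.mem_union_left _
        (Finset.mem_image.mpr ⟨i, Finset.mem_univ i, rfl⟩)
      have := hzero (θ i) hmem
      rw [hg] at this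
      simp only [hg1, if_neg hne, sub_zero] at this
      exact hc i this
    refine ⟨?_, hθ1⟩
    by_contra hm1
    push_neg at hm1
    have h0 : θ ⟨0, by omega⟩ = θ ⟨1, by omega⟩ := by
      rw [hθ1, hθ1]
    have := hθ h0
    simp at this
  · rintro ⟨_, h1⟩
    refine ⟨∑ i, c i, fun s hs => ?_⟩
    rw [hf s hs]
    apply Finset.sum_congr rfl
    intro i _
    rw [h1 i]
    simp
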